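/- Let R be a field of characteristic zero, n ≥ 3, and let φ = Λ ∘ σ^m ∘ ψ_D ∘ Δ be an automorphism of UT_n(R), where Λ is a central automorphism, σ is the flip automorphism, m ∈ {0,1}, ψ_D is a diagonal automorphism, and Δ is a ring automorphism. If R(φ) < ∞, then every element of UT_n(R) is φ-conjugate to some element of the center Z₁ of UT_n(R). -/

import Mathlib

open Matrix

/-- `x` and `y` are twisted conjugate with respect to the automorphism `φ`,
i.e. `x = z * y * (φ z)⁻¹` for some `z`. -/
def TwistedConj {G : Type*} [Group G] (φ : G ≃* G) (x y : G) : Prop :=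
  ∃ z : G, x = z * y * (φ z)⁻¹

/-- The Reidemeister number of an automorphism: the number of twisted conjugacy classes,
as an element of `ℕ∞ = ℕ ∪ {∞}` (`⊤` meaning infinitely many classes). -/
noncomputable def reidemeisterNumber {G : Type*} [Group G] (φ : G ≃* G) : ℕ∞ :=
  Cardinal.toENat (Cardinal.mk (Quot (TwistedConj φ)))

/-- A matrix is (upper) unitriangular if it has `1` on the diagonal and `0` below it. -/
def Matrix.IsUnitriangular {n : ℕ} {R : Type*} [CommRing R]
    (M : Matrix (Fin n) (Fin n) R) : Prop :=
  (∀ i, M i i = 1) ∧ ∀ ⦃i j : Fin n⦄, j < i → M i j = 0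

namespace Matrix.IsUnitriangular

variable {n : ℕ} {R : Type*} [CommRing R] {M N : Matrix (Fin n) (Fin n) R}

theorem blockTriangular (h : M.IsUnitriangular) : M.BlockTriangular (id : Fin n → Fin n) :=
  fun _ _ hij => h.2 hij

theorem one : (1 : Matrix (Fin n) (Fin n) R).IsUnitriangular :=
  ⟨fun i => by simp, fun i j hij => by simp [Matrix.one_apply, (ne_of_lt hij).symm]⟩

theorem diag_mul (hM : M.IsUnitriangular) (hN : N.BlockTriangular (id : Fin n → Fin n))
    (i : Fin n) : (M * N) i i = N i i := by
  rw [Matrix.mul_apply, Finset.sum_eq_single i]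
  · rw [hM.1 i, one_mul]
  · intro k _ hk
    rcases lt_or_gt_of_ne hk with hlt | hgt
    · rw [hM.2 hlt, zero_mul]
    · rw [hN (show (id i : Fin n) < id k from hgt), mul_zero]
  · intro h; exact absurd (Finset.mem_univ i) h

theorem mul (hM : M.IsUnitriangular) (hN : N.IsUnitriangular) : (M * N).IsUnitriangular := by
  constructor
  · intro i
    rw [hM.diag_mul hN.blockTriangular i, hN.1 i]
  · intro i j hij
    rw [Matrix.mul_apply]
    refine Finset.sum_eq_zero fun k _ => ?_
    rcases lt_or_ge k i with hk | hk
    · rw [hM.2 hk, zero_mul]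
    · rw [hN.2 (lt_of_lt_of_le hij hk), mul_zero]

end Matrix.IsUnitriangular

/-- The group `UT n R` of upper unitriangular `n × n` matrices over `R`, realized as a
subgroup of the group of units of the matrix ring. -/
def UT (n : ℕ) (R : Type*) [CommRing R] : Subgroup (Matrix (Fin n) (Fin n) R)ˣ where
  carrier := {u | Matrix.IsUnitriangular (u : Matrix (Fin n) (Fin n) R)}
  one_mem' := by simpa using Matrix.IsUnitriangular.one
  mul_mem' := by
    intro a b ha hb
    simpa using ha.mul hb
  inv_mem' := by
    intro u hu
    have hdet : IsUnit ((u : Matrix (Fin n) (Fin n) R)).det :=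
      (Matrix.isUnit_iff_isUnit_det _).mp u.isUnit
    haveI : Invertible (u : Matrix (Fin n) (Fin n) R) := u.invertible
    have htri : ((u : Matrix (Fin n) (Fin n) R)⁻¹).BlockTriangular (id : Fin n → Fin n) :=
      Matrix.blockTriangular_inv_of_blockTriangular hu.blockTriangular
    have hval : ((u⁻¹ : (Matrix (Fin n) (Fin n) R)ˣ) : Matrix (Fin n) (Fin n) R)
        = (u : Matrix (Fin n) (Fin n) R)⁻¹ := by
      simp [Matrix.coe_units_inv]
    constructor
    · intro i
      have h1 : ((u : Matrix (Fin n) (Fin n) R) * (u : Matrix (Fin n) (Fin n) R)⁻¹) i i = 1 := by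
        rw [Matrix.mul_nonsing_inv _ hdet]; simp
      rw [hval]
      rw [hu.diag_mul htri i] at h1
      exact h1
    · intro i j hij
      rw [hval]
      exact htri hij

/-- The underlying matrix of an element of `UT n R`. -/
def UTmat {n : ℕ} {R : Type*} [CommRing R] (X : UT n R) : Matrix (Fin n) (Fin n) R :=
  ((X : (Matrix (Fin n) (Fin n) R)ˣ) : Matrix (Fin n) (Fin n) R)

section Generators

variable {n : ℕ} {R : Type*} [CommRing R]

theorem TU_mul_aux (i j : Fin n) (h : i < j) (x : R) :
    (1 + Matrix.single i j x) * (1 + Matrix.single i j (-x)) = 1 := by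
  have h0 : Matrix.single i j x * Matrix.single i j (-x) = 0 :=
    Matrix.single_mul_single_of_ne (c := x) i j i (ne_of_lt h).symm (-x)
  have h1 : Matrix.single i j x + Matrix.single i j (-x) = 0 := by
    rw [← Matrix.single_add]; simp
  calc (1 + Matrix.single i j x) * (1 + Matrix.single i j (-x))
      = 1 + (Matrix.single i j x + Matrix.single i j (-x))
        + Matrix.single i j x * Matrix.single i j (-x) := by noncomm_ring
    _ = 1 := by rw [h1, h0, add_zero, add_zero]

theorem TU_isUnitriangular (i j : Fin n) (h : i < j) (x : R) :
    ((1 + Matrix.single i j x) : Matrix (Fin n) (Fin n) R).IsUnitriangular := by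
  constructor
  · intro k
    rw [Matrix.add_apply, Matrix.one_apply_eq,
      Matrix.single_apply_of_ne i j x k k (by rintro ⟨rfl, rfl⟩; exact lt_irrefl _ h)]
    ring
  · intro k l hkl
    rw [Matrix.add_apply, Matrix.one_apply_ne (ne_of_gt hkl),
      Matrix.single_apply_of_ne i j x k l
        (by rintro ⟨rfl, rfl⟩; exact absurd h (not_lt.mpr hkl.le))]
    ring

/-- The elementary unitriangular matrix `T_{i,j}(x) = I + x·E_{i,j}` as an element of
`UT n R` (with junk value `1` when `¬ i < j`). -/
noncomputable def TU (i j : Fin n) (x : R) : UT n R :=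
  if h : i < j then
    ⟨⟨1 + Matrix.single i j x, 1 + Matrix.single i j (-x),
      TU_mul_aux i j h x, by simpa using TU_mul_aux i j h (-x)⟩, TU_isUnitriangular i j h x⟩
  else 1

/-- `ψ` is the diagonal automorphism `X ↦ D X D⁻¹` associated to a diagonal matrix `D`
with unit diagonal entries. -/
def IsDiagonalAut (ψ : MulAut (UT n R)) : Prop :=
  ∃ d : Fin n → Rˣ, ∀ X : UT n R,
    UTmat (ψ X) = Matrix.diagonal (fun i => (d i : R)) * UTmat X
      * Matrix.diagonal (fun i => (((d i)⁻¹ : Rˣ) : R))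

/-- `Δ` is the ring automorphism of `UT n R` induced entrywise by a ring automorphism of `R`. -/
def IsRingAut (Δ : MulAut (UT n R)) : Prop :=
  ∃ δ : R ≃+* R, ∀ (X : UT n R) (i j : Fin n), UTmat (Δ X) i j = δ (UTmat X i j)

/-- `σ` is the flip automorphism: reflect the matrix across the antidiagonal, then invert. -/
def IsFlipAut (σ : MulAut (UT n R)) : Prop :=
  ∀ X : UT n R, UTmat (σ X) = (Matrix.of fun i j : Fin n => UTmat X j.rev i.rev)⁻¹

/-- `Λ` is a central automorphism: there is an additive endomorphism `λ` of `R` such that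
`Λ(T_{i,i+1}(x)) = T_{i,i+1}(x) · T_{1,n}(λ(x))` on the generators. -/
noncomputable def IsCentralAut (h0 : 0 < n) (Λ : MulAut (UT n R)) : Prop :=
  ∃ lam : R →+ R, ∀ i j : Fin n, (j : ℕ) = (i : ℕ) + 1 → ∀ x : R,
    Λ (TU i j x) = TU i j x * TU ⟨0, h0⟩ ⟨n - 1, Nat.sub_lt h0 Nat.one_pos⟩ (lam x)

end Generators
section TCAux

variable {R : Type} [CommRing R] {n : ℕ}

theorem utmat_mul (X Y : UT n R) : UTmat (X * Y) = UTmat X * UTmat Y := rfl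

theorem utmat_one : UTmat (1 : UT n R) = 1 := rfl

theorem utmat_mul_inv (X : UT n R) : UTmat X * UTmat X⁻¹ = 1 := by
  rw [← utmat_mul, mul_inv_cancel, utmat_one]

theorem utmat_diag (X : UT n R) (i : Fin n) : UTmat X i i = 1 := X.2.1 i

theorem utmat_lower (X : UT n R) {i j : Fin n} (h : j < i) : UTmat X i j = 0 := X.2.2 h

/-- `X` lies in the `k`-th term of the level filtration: all entries at levels `< k` vanish. -/
def Egam (k : ℕ) (X : UT n R) : Prop :=
  ∀ i j : Fin n, i < j → (j : ℕ) < (i : ℕ) + k → UTmat X i j = 0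

theorem Egam.one (k : ℕ) : Egam k (1 : UT n R) := by
  intro i j hij _
  rw [utmat_one, Matrix.one_apply_ne (ne_of_lt hij)]

/-- Entry additivity at levels `≤ k` : only requires the left factor in `γ_k`. -/
theorem mul_entry {k : ℕ} {X : UT n R} (hX : Egam k X) (Y : UT n R) {i j : Fin n}
    (hij : i < j) (hjk : (j : ℕ) ≤ (i : ℕ) + k) :
    UTmat (X * Y) i j = UTmat X i j + UTmat Y i j := by
  rw [utmat_mul, Matrix.mul_apply]
  have hij' : i ≠ j := ne_of_lt hij
  rw [show (Finset.univ : Finset (Fin n)) = insert i (insert j (Finset.univ \ {i, j})) by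
    ext l
    simp only [Finset.mem_univ, Finset.mem_insert, Finset.mem_sdiff, Finset.mem_singleton,
      true_iff, true_and]
    tauto]
  rw [Finset.sum_insert (by simp [hij']), Finset.sum_insert (by simp)]
  have hz : ∀ l ∈ Finset.univ \ ({i, j} : Finset (Fin n)),
      UTmat X i l * UTmat Y l j = 0 := by
    intro l hl
    simp only [Finset.mem_sdiff, Finset.mem_insert, Finset.mem_singleton] at hl
    obtain ⟨-, hl⟩ := hl
    push_neg at hl
    obtain ⟨hli, hlj⟩ := hl
    rcases lt_trichotomy l i with h | h | h
    · rw [utmat_lower X h, zero_mul]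
    · exact absurd h hli
    · rcases lt_trichotomy l j with h' | h' | h'
      · rw [hX i l h (by omega), zero_mul]
      · exact absurd h' hlj
      · rw [utmat_lower Y h', mul_zero]
  rw [Finset.sum_eq_zero hz, add_zero, utmat_diag X i, one_mul, utmat_diag Y j, mul_one,
    add_comm]

theorem Egam.mul {k : ℕ} {X Y : UT n R} (hX : Egam k X) (hY : Egam k Y) :
    Egam k (X * Y) := by
  intro i j hij hjk
  rw [mul_entry hX Y hij (le_of_lt hjk), hX i j hij hjk, hY i j hij hjk, add_zero]

theorem inv_entry {k : ℕ} {X : UT n R} (hX : Egam k X) {i j : Fin n}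
    (hij : i < j) (hjk : (j : ℕ) ≤ (i : ℕ) + k) :
    UTmat X⁻¹ i j = -UTmat X i j := by
  have h0 : UTmat (X * X⁻¹) i j = 0 := by
    rw [utmat_mul, utmat_mul_inv, Matrix.one_apply_ne (ne_of_lt hij)]
  rw [mul_entry hX X⁻¹ hij hjk] at h0
  linear_combination h0

theorem Egam.inv {k : ℕ} {X : UT n R} (hX : Egam k X) : Egam k X⁻¹ := by
  intro i j hij hjk
  rw [inv_entry hX hij (le_of_lt hjk), hX i j hij hjk, neg_zero]

theorem conj_entry {k : ℕ} {B : UT n R} (hB : Egam k B) (X : UT n R) {i j : Fin n}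
    (hij : i < j) (hjk : (j : ℕ) ≤ (i : ℕ) + k) :
    UTmat (X * B * X⁻¹) i j = UTmat B i j := by
  have hPQ : UTmat X * UTmat X⁻¹ = 1 := utmat_mul_inv X
  have hN : ∀ l m : Fin n, ¬ (l < m ∧ (l : ℕ) + k ≤ (m : ℕ)) →
      (UTmat B - 1) l m = 0 := by
    intro l m h
    rw [Matrix.sub_apply]
    rcases lt_trichotomy l m with h' | h' | h'
    · rw [Matrix.one_apply_ne (ne_of_lt h'), sub_zero]
      exact hB l m h' (by push_neg at h; omega)
    · subst h'; rw [utmat_diag, Matrix.one_apply_eq, sub_self]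
    · rw [utmat_lower B h', Matrix.one_apply_ne (ne_of_gt h'), sub_zero]
  have expand : UTmat (X * B * X⁻¹) =
      1 + UTmat X * (UTmat B - 1) * UTmat X⁻¹ := by
    rw [utmat_mul, utmat_mul, mul_sub, mul_one, Matrix.sub_mul, hPQ]
    abel
  rw [expand]
  have h1 : (1 : Matrix (Fin n) (Fin n) R) i j = 0 := Matrix.one_apply_ne (ne_of_lt hij)
  rw [Matrix.add_apply, h1, zero_add, Matrix.mul_assoc, Matrix.mul_apply]
  rw [Finset.sum_eq_single i]
  · rw [utmat_diag X i, one_mul, Matrix.mul_apply, Finset.sum_eq_single j]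
    · rw [utmat_diag X⁻¹ j, mul_one, Matrix.sub_apply, h1, sub_zero]
    · intro m _ hm
      rcases lt_trichotomy m j with h' | h' | h'
      · rw [hN i m (by push_neg; intro _; omega), zero_mul]
      · exact absurd h' hm
      · rw [utmat_lower X⁻¹ h', mul_zero]
    · intro h; exact absurd (Finset.mem_univ j) h
  · intro l _ hl
    rcases lt_trichotomy l i with h' | h' | h'
    · rw [utmat_lower X h', zero_mul]
    · exact absurd h' hl
    · have : ((UTmat B - 1) * UTmat X⁻¹) l j = 0 := by
        rw [Matrix.mul_apply]
        refine Finset.sum_eq_zero fun m _ => ?_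
        by_cases hm : l < m ∧ (l : ℕ) + k ≤ (m : ℕ)
        · rw [utmat_lower X⁻¹ (show (j : Fin n) < m by
            have := hm.2; exact Fin.lt_def.mpr (by omega)), mul_zero]
        · rw [hN l m hm, zero_mul]
      rw [this, mul_zero]
  · intro h; exact absurd (Finset.mem_univ i) h

theorem Egam.conj {k : ℕ} {B : UT n R} (hB : Egam k B) (X : UT n R) :
    Egam k (X * B * X⁻¹) := by
  intro i j hij hjk
  rw [conj_entry hB X hij (le_of_lt hjk), hB i j hij hjk]

end TCAux
section TCAux2

variable {R : Type} [CommRing R] {n : ℕ}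

theorem utmat_TU {i j : Fin n} (h : i < j) (x : R) :
    UTmat (TU i j x) = 1 + Matrix.single i j x := by
  rw [TU, dif_pos h]; rfl

theorem Egam_TU {k : ℕ} {i j : Fin n} (hk : (i : ℕ) + k ≤ (j : ℕ)) (x : R) :
    Egam k (TU i j x) := by
  by_cases h : i < j
  · intro a b hab hbk
    rw [utmat_TU h, Matrix.add_apply, Matrix.one_apply_ne (ne_of_lt hab)]
    have : ¬ (i = a ∧ j = b) := by
      rintro ⟨rfl, rfl⟩; omega
    simp [Matrix.single, this]
  · rw [TU, dif_neg h]; exact Egam.one k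

theorem list_prod_entry {k : ℕ} (L : List (UT n R)) (hL : ∀ g ∈ L, Egam k g) :
    Egam k L.prod ∧ ∀ i j : Fin n, i < j → (j : ℕ) ≤ (i : ℕ) + k →
      UTmat L.prod i j = (L.map (fun g => UTmat g i j)).sum := by
  induction L with
  | nil =>
    refine ⟨by simpa using Egam.one k, fun i j hij _ => ?_⟩
    simp [utmat_one, Matrix.one_apply_ne (ne_of_lt hij)]
  | cons g L ih =>
    have hg : Egam k g := hL g List.mem_cons_self
    obtain ⟨ih1, ih2⟩ := ih (fun g' hg' => hL g' (List.mem_cons_of_mem g hg'))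
    refine ⟨by simpa [List.prod_cons] using hg.mul ih1, fun i j hij hjk => ?_⟩
    rw [List.prod_cons, mul_entry hg L.prod hij hjk, List.map_cons, List.sum_cons,
      ih2 i j hij hjk]

/-- The product `∏ᵢ T_{i,i+k}(v i)`, an element of `γ_k` with prescribed level-`k` entries. -/
noncomputable def Bv (k : ℕ) (v : Fin n → R) : UT n R :=
  ((List.finRange n).map
    (fun i : Fin n => if h : (i : ℕ) + k < n then TU i ⟨(i : ℕ) + k, h⟩ (v i) else 1)).prod

theorem Bv_spec (k : ℕ) (hk : 1 ≤ k) (v : Fin n → R) :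
    Egam k (Bv k v) ∧ ∀ (i : Fin n) (h : (i : ℕ) + k < n),
      UTmat (Bv k v) i ⟨(i : ℕ) + k, h⟩ = v i := by
  have hfac : ∀ g ∈ (List.finRange n).map
      (fun i : Fin n => if h : (i : ℕ) + k < n then TU i ⟨(i : ℕ) + k, h⟩ (v i) else 1),
      Egam k g := by
    intro g hg
    rw [List.mem_map] at hg
    obtain ⟨l, -, rfl⟩ := hg
    by_cases h : (l : ℕ) + k < n
    · rw [dif_pos h]; exact Egam_TU (by simp) (v l)
    · rw [dif_neg h]; exact Egam.one k
  obtain ⟨h1, h2⟩ := list_prod_entry _ hfac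
  refine ⟨h1, fun i h => ?_⟩
  have hij : i < (⟨(i : ℕ) + k, h⟩ : Fin n) := by rw [Fin.lt_def]; simp; omega
  rw [Bv, h2 i _ hij (by simp), List.map_map]
  rw [← Fin.sum_univ_def]
  simp only [Function.comp_apply]
  rw [Finset.sum_eq_single i]
  · rw [dif_pos h, utmat_TU hij, Matrix.add_apply, Matrix.one_apply_ne (ne_of_lt hij)]
    simp [Matrix.single]
  · intro l _ hl
    by_cases h' : (l : ℕ) + k < n
    · rw [dif_pos h']
      have hlij : l < (⟨(l : ℕ) + k, h'⟩ : Fin n) := by rw [Fin.lt_def]; simp; omega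
      rw [utmat_TU hlij, Matrix.add_apply]
      have hne : i ≠ (⟨(i : ℕ) + k, h⟩ : Fin n) := ne_of_lt hij
      rw [Matrix.one_apply_ne hne]
      have hcond : ¬ (l = i ∧ (⟨(l : ℕ) + k, h'⟩ : Fin n) = ⟨(i : ℕ) + k, h⟩) := by
        rintro ⟨rfl, -⟩; exact hl rfl
      have hstd : Matrix.single l (⟨(l : ℕ) + k, h'⟩ : Fin n) (v l) i (⟨(i : ℕ) + k, h⟩ : Fin n) = 0 := by
        simp only [Matrix.single, Matrix.of_apply]
        rw [if_neg hcond]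
      rw [hstd, add_zero]
    · rw [dif_neg h', utmat_one, Matrix.one_apply_ne (ne_of_lt hij)]
  · intro h'; exact absurd (Finset.mem_univ i) h'

/-- The additive subgroup of level-`k` profiles realized by `z ↦ z · φ(z)⁻¹`. -/
def Sgrp (φ : (UT n R) ≃* (UT n R)) (k : ℕ) (hk : 1 ≤ k) : AddSubgroup (Fin n → R) where
  carrier := {v | ∃ z : UT n R, Egam k (z * (φ z)⁻¹) ∧
    ∀ (i : Fin n) (h : (i : ℕ) + k < n), UTmat (z * (φ z)⁻¹) i ⟨(i : ℕ) + k, h⟩ = v i}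
  zero_mem' := by
    refine ⟨1, ?_, ?_⟩ <;> have h1 : (1 : UT n R) * (φ 1)⁻¹ = 1 := by simp
    · rw [h1]; exact Egam.one k
    · intro i h
      have hij : i < (⟨(i : ℕ) + k, h⟩ : Fin n) := by rw [Fin.lt_def]; simp; omega
      rw [h1, utmat_one, Matrix.one_apply_ne (ne_of_lt hij)]; rfl
  add_mem' := by
    rintro v w ⟨z, hz, hze⟩ ⟨z', hz', hze'⟩
    have hid : (z * z') * (φ (z * z'))⁻¹ =
        (z * (z' * (φ z')⁻¹) * z⁻¹) * (z * (φ z)⁻¹) := by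
      rw [_root_.map_mul]; group
    refine ⟨z * z', ?_, ?_⟩
    · rw [hid]; exact (hz'.conj z).mul hz
    · intro i h
      have hij : i < (⟨(i : ℕ) + k, h⟩ : Fin n) := by rw [Fin.lt_def]; simp; omega
      rw [hid, mul_entry (hz'.conj z) _ hij (by simp), conj_entry hz' z hij (by simp),
        hze' i h, hze i h]
      simp [add_comm]
  neg_mem' := by
    rintro v ⟨z, hz, hze⟩
    have hid : z⁻¹ * (φ z⁻¹)⁻¹ = z⁻¹ * (z * (φ z)⁻¹)⁻¹ * (z⁻¹)⁻¹ := by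
      rw [_root_.map_inv]; group
    refine ⟨z⁻¹, ?_, ?_⟩
    · rw [hid]; exact hz.inv.conj z⁻¹
    · intro i h
      have hij : i < (⟨(i : ℕ) + k, h⟩ : Fin n) := by rw [Fin.lt_def]; simp; omega
      rw [hid, conj_entry hz.inv z⁻¹ hij (by simp), inv_entry hz hij (by simp), hze i h]
      rfl

theorem mem_Sgrp {φ : (UT n R) ≃* (UT n R)} {k : ℕ} {hk : 1 ≤ k} {v : Fin n → R} :
    v ∈ Sgrp φ k hk ↔ ∃ z : UT n R, Egam k (z * (φ z)⁻¹) ∧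
      ∀ (i : Fin n) (h : (i : ℕ) + k < n), UTmat (z * (φ z)⁻¹) i ⟨(i : ℕ) + k, h⟩ = v i :=
  Iff.rfl

end TCAux2
section TCAux3

theorem twistedConj_equivalence {G : Type*} [Group G] (φ : G ≃* G) :
    Equivalence (TwistedConj φ) := by
  constructor
  · intro x; exact ⟨1, by simp⟩
  · rintro x y ⟨z, rfl⟩
    exact ⟨z⁻¹, by rw [_root_.map_inv]; group⟩
  · rintro x y u ⟨z, rfl⟩ ⟨w, rfl⟩
    exact ⟨z * w, by rw [_root_.map_mul]; group⟩

theorem finite_quot {G : Type*} [Group G] (φ : G ≃* G)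
    (hfin : reidemeisterNumber φ ≠ ⊤) : Finite (Quot (TwistedConj φ)) := by
  rw [reidemeisterNumber, ne_eq, Cardinal.toENat_eq_top, not_le] at hfin
  exact Cardinal.mk_lt_aleph0_iff.mp hfin

variable {R : Type} [CommRing R] {n : ℕ}

theorem collide {φ : (UT n R) ≃* (UT n R)} {k : ℕ} (hk : 1 ≤ k) {u u' : Fin n → R}
    (h : Quot.mk (TwistedConj φ) (Bv k u) = Quot.mk (TwistedConj φ) (Bv k u')) :
    u - u' ∈ Sgrp φ k hk := by
  have htc : TwistedConj φ (Bv k u) (Bv k u') :=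
    ((twistedConj_equivalence φ).eqvGen_iff).mp (Quot.eq.mp h)
  obtain ⟨z, hz⟩ := htc
  have hid : z * (φ z)⁻¹ = (z * Bv k u' * z⁻¹)⁻¹ * Bv k u := by rw [hz]; group
  obtain ⟨hBu, hBue⟩ := Bv_spec k hk u
  obtain ⟨hBu', hBue'⟩ := Bv_spec k hk u'
  refine mem_Sgrp.mpr ⟨z, ?_, ?_⟩
  · rw [hid]; exact ((hBu'.conj z).inv).mul hBu
  · intro i h'
    have hij : i < (⟨(i : ℕ) + k, h'⟩ : Fin n) := by rw [Fin.lt_def]; simp; omega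
    rw [hid, mul_entry ((hBu'.conj z).inv) _ hij (by simp),
      inv_entry (hBu'.conj z) hij (by simp), conj_entry hBu' z hij (by simp),
      hBue i h', hBue' i h', Pi.sub_apply]
    ring

end TCAux3

section TCAux4

variable {R : Type} [Field R] [CharZero R] {n : ℕ}

theorem Sgrp_top {φ : (UT n R) ≃* (UT n R)} {k : ℕ} (hk : 1 ≤ k)
    (hfin : reidemeisterNumber φ ≠ ⊤) (v : Fin n → R) : v ∈ Sgrp φ k hk := by
  haveI := finite_quot φ hfin
  haveI : Fintype (Quot (TwistedConj φ)) := Fintype.ofFinite _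
  set N := Nat.card (Quot (TwistedConj φ)) with hNdef
  set F : R := (N.factorial : R) with hFdef
  have hFne : F ≠ 0 := by
    rw [hFdef]
    exact_mod_cast Nat.cast_ne_zero.mpr (Nat.factorial_ne_zero N)
  set u : ℕ → (Fin n → R) := fun a i => ((a : R) / F) * v i with hudef
  have pair : ∀ s s' : ℕ, s' < s → s ≤ N →
      Quot.mk (TwistedConj φ) (Bv k (u s)) = Quot.mk (TwistedConj φ) (Bv k (u s')) →
      v ∈ Sgrp φ k hk := by
    intro s s' hlt hsN heq
    set m := s - s' with hmdef
    have hm1 : 1 ≤ m := by omega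
    have hmN : m ≤ N := by omega
    have hd : u s - u s' = u m := by
      funext i
      rw [Pi.sub_apply, hudef]
      simp only
      rw [hmdef, Nat.cast_sub hlt.le]
      ring
    have hmem : u m ∈ Sgrp φ k hk := hd ▸ collide hk heq
    have hq : (N.factorial / m) * m = N.factorial :=
      Nat.div_mul_cancel (Nat.dvd_factorial hm1 hmN)
    have hveq : v = (N.factorial / m) • u m := by
      funext i
      rw [Pi.smul_apply, nsmul_eq_mul, hudef]
      simp only
      have hc : ((N.factorial / m : ℕ) : R) * (m : R) = F := by
        rw [hFdef, ← Nat.cast_mul, hq]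
      field_simp
      calc v i * F = v i * (((N.factorial / m : ℕ) : R) * (m : R)) := by rw [hc]
        _ = ((N.factorial / m : ℕ) : R) * ((m : R) * v i) := by ring
      ring
    rw [hveq]
    exact AddSubgroup.nsmul_mem _ hmem _
  obtain ⟨s, s', hne, heq⟩ := Fintype.exists_ne_map_eq_of_card_lt
    (fun s : Fin (N + 1) => Quot.mk (TwistedConj φ) (Bv k (u (s : ℕ))))
    (by rw [Fintype.card_fin, ← Nat.card_eq_fintype_card]; omega)
  have hvne : (s : ℕ) ≠ (s' : ℕ) := fun hc => hne (Fin.ext hc)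
  rcases lt_or_gt_of_ne hvne with hlt | hlt
  · exact pair s' s hlt (by omega) heq.symm
  · exact pair s s' hlt (by omega) heq

theorem level_step {φ : (UT n R) ≃* (UT n R)} {k : ℕ} (hk : 1 ≤ k)
    (hfin : reidemeisterNumber φ ≠ ⊤) (B : UT n R) (hB : Egam k B) :
    ∃ w : UT n R, Egam (k + 1) (w * B * (φ w)⁻¹) := by
  set v : Fin n → R := fun i =>
    if h : (i : ℕ) + k < n then -(UTmat B i ⟨(i : ℕ) + k, h⟩) else 0 with hvdef
  obtain ⟨w, hw, hwe⟩ := mem_Sgrp.mp (Sgrp_top hk hfin v)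
  refine ⟨w, ?_⟩
  have hid : w * B * (φ w)⁻¹ = (w * B * w⁻¹) * (w * (φ w)⁻¹) := by group
  rw [hid]
  intro i j hij hjk
  rcases lt_or_eq_of_le (show (j : ℕ) ≤ (i : ℕ) + k by omega) with hlt | heq
  · exact ((hB.conj w).mul hw) i j hij hlt
  · have hin : (i : ℕ) + k < n := heq ▸ j.isLt
    have hj : j = (⟨(i : ℕ) + k, hin⟩ : Fin n) := Fin.ext heq
    rw [mul_entry (hB.conj w) _ hij (le_of_eq heq), conj_entry hB w hij (le_of_eq heq),
      hj, hwe i hin, hvdef]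
    simp only [dif_pos hin]
    ring

theorem egam_center (hn : 2 ≤ n) {B : UT n R} (hB : Egam (n - 1) B) :
    B ∈ Subgroup.center (UT n R) := by
  rw [Subgroup.mem_center_iff]
  intro g
  set z0 : Fin n := ⟨0, by omega⟩ with hz0
  set e : Fin n := ⟨n - 1, by omega⟩ with he
  have hz0v : (z0 : ℕ) = 0 := rfl
  have hev : (e : ℕ) = n - 1 := rfl
  set c : R := UTmat B z0 e with hc
  have hBmat : UTmat B = 1 + Matrix.single z0 e c := by
    ext a b
    rw [Matrix.add_apply]
    by_cases hab : a = b
    · subst hab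
      rw [utmat_diag, Matrix.one_apply_eq]
      have : ¬ (z0 = a ∧ e = a) := by
        rintro ⟨rfl, hea⟩
        have h' := congrArg Fin.val hea
        omega
      simp only [Matrix.single, Matrix.of_apply]
      rw [if_neg this, add_zero]
    · rcases lt_or_gt_of_ne hab with hlt | hgt
      · rw [Matrix.one_apply_ne hab]
        by_cases hcase : (b : ℕ) < (a : ℕ) + (n - 1)
        · rw [hB a b hlt hcase]
          have : ¬ (z0 = a ∧ e = b) := by
            rintro ⟨rfl, rfl⟩; omega
          simp only [Matrix.single, Matrix.of_apply]
          rw [if_neg this, add_zero]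
        · have hb : b = e := Fin.ext (by have := b.isLt; omega)
          have ha : a = z0 := Fin.ext (by have := b.isLt; omega)
          subst hb; subst ha
          simp only [Matrix.single, Matrix.of_apply]
          simp [hc]
      · rw [Matrix.one_apply_ne hab, utmat_lower B hgt]
        have : ¬ (z0 = a ∧ e = b) := by
          rintro ⟨rfl, rfl⟩
          have := Fin.lt_def.mp hgt
          omega
        simp only [Matrix.single, Matrix.of_apply]
        rw [if_neg this, add_zero]
  have h1 : UTmat g * Matrix.single z0 e c = Matrix.single z0 e c := by
    ext a b
    rw [Matrix.mul_apply, Finset.sum_eq_single z0]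
    · by_cases ha : a = z0
      · subst ha; rw [utmat_diag, one_mul]
      · have hlt : z0 < a := by
          rw [Fin.lt_def]
          have : (a : ℕ) ≠ 0 := fun hc => ha (Fin.ext (by omega))
          omega
        rw [utmat_lower g hlt, zero_mul]
        have : ¬ (z0 = a ∧ e = b) := fun ⟨hc', _⟩ => ha hc'.symm
        simp only [Matrix.single, Matrix.of_apply]
        rw [if_neg this]
    · intro l _ hl
      have : ¬ (z0 = l ∧ e = b) := fun ⟨hc', _⟩ => hl hc'.symm
      simp only [Matrix.single, Matrix.of_apply]
      rw [if_neg this, mul_zero]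
    · intro h'; exact absurd (Finset.mem_univ z0) h'
  have h2 : Matrix.single z0 e c * UTmat g = Matrix.single z0 e c := by
    ext a b
    rw [Matrix.mul_apply, Finset.sum_eq_single e]
    · by_cases hb : b = e
      · subst hb; rw [utmat_diag, mul_one]
      · have hlt : b < e := by
          rw [Fin.lt_def]
          have h1' := b.isLt
          have : (b : ℕ) ≠ n - 1 := fun hc => hb (Fin.ext (by omega))
          omega
        rw [utmat_lower g hlt, mul_zero]
        have : ¬ (z0 = a ∧ e = b) := fun ⟨_, hc'⟩ => hb hc'.symm
        simp only [Matrix.single, Matrix.of_apply]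
        rw [if_neg this]
    · intro l _ hl
      have : ¬ (z0 = a ∧ e = l) := fun ⟨_, hc'⟩ => hl hc'.symm
      simp only [Matrix.single, Matrix.of_apply]
      rw [if_neg this, zero_mul]
    · intro h'; exact absurd (Finset.mem_univ e) h'
  have hmat : UTmat (g * B) = UTmat (B * g) := by
    rw [utmat_mul, utmat_mul, hBmat, mul_add, add_mul, mul_one, one_mul, h1, h2]
  exact Subtype.ext (Units.ext hmat)

end TCAux4

/-- Let `R` be a field of characteristic zero, `n ≥ 3`, and `φ = Λ ∘ σ^m ∘ ψ_D ∘ Δ` an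
automorphism of `UT n R` with finite Reidemeister number. Then every element of `UT n R`
is `φ`-conjugate to a central element. -/
theorem twisted_conj_to_central_element
    {R : Type} [Field R] [CharZero R] {n : ℕ} (hn : 3 ≤ n)
    (Λ σ ψ Δ : MulAut (UT n R)) (m : ℕ) (hm : m ≤ 1)
    (hΛ : IsCentralAut (show 0 < n by omega) Λ) (hσ : IsFlipAut σ)
    (hψ : IsDiagonalAut ψ) (hΔ : IsRingAut Δ)
    (φ : MulAut (UT n R)) (hφ : φ = Λ * σ ^ m * ψ * Δ)
    (hfin : reidemeisterNumber (φ : (UT n R) ≃* (UT n R)) ≠ ⊤) :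
    ∀ A : UT n R, ∃ C X : UT n R, C ∈ Subgroup.center (UT n R) ∧
      A = X⁻¹ * C * φ X := by
  intro A
  have key : ∀ k : ℕ, 1 ≤ k → ∃ z : UT n R, Egam k (z * A * (φ z)⁻¹) := by
    intro k hk
    induction k, hk using Nat.le_induction with
    | base =>
      refine ⟨1, fun i j hij hjk => absurd hij ?_⟩
      rw [Fin.lt_def]
      omega
    | succ k hk ih =>
      obtain ⟨z, hz⟩ := ih
      obtain ⟨w, hw⟩ := level_step hk hfin (z * A * (φ z)⁻¹) hz
      refine ⟨w * z, ?_⟩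
      have hid : (w * z) * A * (φ (w * z))⁻¹ =
          w * (z * A * (φ z)⁻¹) * (φ w)⁻¹ := by
        rw [_root_.map_mul]; group
      rw [hid]
      exact hw
  obtain ⟨z, hz⟩ := key (n - 1) (by omega)
  refine ⟨z * A * (φ z)⁻¹, z, egam_center (by omega) hz, ?_⟩
  group
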